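/- arXiv:2207.03275 — 3 statements merged into one kernel-verified Lean document; each statement's English description precedes it below -/
import Mathlib

section
/- (Additivity of the reconfiguration function) For every shape S and all natural numbers l, k, l', k' it holds that F_{l',k'}(F_{l,k}(S)) = F_{l'+l, k'+k}(S). -/
/-- Minimum first coordinate of a shape (0 for the empty set). -/
def xmin (S : Finset (ℤ × ℤ)) : ℤ := ((S.image Prod.fst).min).untopD 0

/-- Minimum second coordinate of a shape (0 for the empty set). -/
def ymin (S : Finset (ℤ × ℤ)) : ℤ := ((S.image Prod.snd).min).untopD 0

/-- East full doubling. -/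
def DE (S : Finset (ℤ × ℤ)) : Finset (ℤ × ℤ) :=
  S.image (fun p => (2 * p.1 - xmin S, p.2)) ∪
    S.image (fun p => (2 * p.1 - xmin S + 1, p.2))

/-- North full doubling. -/
def DN (S : Finset (ℤ × ℤ)) : Finset (ℤ × ℤ) :=
  S.image (fun p => (p.1, 2 * p.2 - ymin S)) ∪
    S.image (fun p => (p.1, 2 * p.2 - ymin S + 1))

/-- Apply a sequence of full doubling operations (`true` = east, `false` = north),
in order (head of the list first). -/
def applySeq (σ : List Bool) (S : Finset (ℤ × ℤ)) : Finset (ℤ × ℤ) :=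
  σ.foldl (fun T b => if b then DE T else DN T) S

/-- The (p,q)-rectangle around an integer point. -/
noncomputable def Rec2 (u : ℤ × ℤ) (p q : ℕ) : Finset (ℤ × ℤ) :=
  Finset.Icc u.1 (u.1 + (p : ℤ) - 1) ×ˢ Finset.Icc u.2 (u.2 + (q : ℤ) - 1)

/-- The reconfiguration function `F_{l,k}`. -/
noncomputable def F (l k : ℕ) (S : Finset (ℤ × ℤ)) : Finset (ℤ × ℤ) :=
  S.biUnion fun p =>
    Rec2 (p.1 + ((2 : ℤ) ^ l - 1) * (p.1 - xmin S),
          p.2 + ((2 : ℤ) ^ k - 1) * (p.2 - ymin S)) (2 ^ l) (2 ^ k)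

/-- Two grid points are adjacent if they are at orthogonal distance 1. -/
def Adj (u v : ℤ × ℤ) : Prop := (u.1 - v.1).natAbs + (u.2 - v.2).natAbs = 1

/-- A shape is connected if any two of its points are joined by a path of
adjacent points inside the shape. -/
def ShapeConnected (S : Finset (ℤ × ℤ)) : Prop :=
  ∀ u ∈ S, ∀ v ∈ S,
    Relation.ReflTransGen (fun a b => a ∈ S ∧ b ∈ S ∧ Adj a b) u v

/-- `wD D x` is the number of elements of `D` strictly west of `x`. -/
def wD (D : Finset ℤ) (x : ℤ) : ℕ := (D.filter (· < x)).card

/-- East RC doubling of `S` with doubled column set `D`. -/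
def RCE (S : Finset (ℤ × ℤ)) (D : Finset ℤ) : Finset (ℤ × ℤ) :=
  S.image (fun p => (p.1 + (wD D p.1 : ℤ), p.2)) ∪
    (S.filter fun p => p.1 ∈ D).image fun p => (p.1 + (wD D p.1 : ℤ) + 1, p.2)

/-- North RC doubling of `S` with doubled row set `D`. -/
def RCN (S : Finset (ℤ × ℤ)) (D : Finset ℤ) : Finset (ℤ × ℤ) :=
  S.image (fun p => (p.1, p.2 + (wD D p.2 : ℤ))) ∪
    (S.filter fun p => p.2 ∈ D).image fun p => (p.1, p.2 + (wD D p.2 : ℤ) + 1)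

/-- `D` is an admissible doubled column set for `S`. -/
def eastAdmissible (S : Finset (ℤ × ℤ)) (D : Finset ℤ) : Prop :=
  D.Nonempty ∧ ∀ d ∈ D, ∃ y, (d, y) ∈ S

/-- `D` is an admissible doubled row set for `S`. -/
def northAdmissible (S : Finset (ℤ × ℤ)) (D : Finset ℤ) : Prop :=
  D.Nonempty ∧ ∀ d ∈ D, ∃ x, (x, d) ∈ S

/-- One east or north RC doubling step. -/
def RCStep (S T : Finset (ℤ × ℤ)) : Prop :=
  ∃ D : Finset ℤ,
    (eastAdmissible S D ∧ T = RCE S D) ∨ (northAdmissible S D ∧ T = RCN S D)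

/-- One single column or single row doubling step (an RC step with `|D| = 1`). -/
def SingleStep (S T : Finset (ℤ × ℤ)) : Prop :=
  ∃ D : Finset ℤ, D.card = 1 ∧
    ((eastAdmissible S D ∧ T = RCE S D) ∨ (northAdmissible S D ∧ T = RCN S D))

/-- Translate a shape by a vector. -/
def translateSh (v : ℤ × ℤ) (S : Finset (ℤ × ℤ)) : Finset (ℤ × ℤ) :=
  S.image fun p => (p.1 + v.1, p.2 + v.2)

/-- Single east column doubling at column `d`. -/
def oE (d : ℤ) (T : Finset (ℤ × ℤ)) : Finset (ℤ × ℤ) :=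
  (T.filter fun p => p.1 ≤ d) ∪ (T.filter fun p => d ≤ p.1).image fun p => (p.1 + 1, p.2)

/-- The column of `S` at `x`. -/
def colS (S : Finset (ℤ × ℤ)) (x : ℤ) : Finset ℤ := (S.filter fun p => p.1 = x).image Prod.snd

/-- The row of `S` at `y`. -/
def rowS (S : Finset (ℤ × ℤ)) (y : ℤ) : Finset ℤ := (S.filter fun p => p.2 = y).image Prod.fst

/-- `phiC S x` counts the column changes of `S` in the interval `(xmin S, x]`. -/
noncomputable def phiC (S : Finset (ℤ × ℤ)) (x : ℤ) : ℕ :=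
  ((Finset.Icc (xmin S + 1) x).filter fun x' => colS S x' ≠ colS S (x' - 1)).card

/-- `phiR S y` counts the row changes of `S` in the interval `(ymin S, y]`. -/
noncomputable def phiR (S : Finset (ℤ × ℤ)) (y : ℤ) : ℕ :=
  ((Finset.Icc (ymin S + 1) y).filter fun y' => rowS S y' ≠ rowS S (y' - 1)).card

/-- Column compression of a shape. -/
noncomputable def KC (S : Finset (ℤ × ℤ)) : Finset (ℤ × ℤ) := S.image fun p => ((phiC S p.1 : ℤ), p.2)

/-- Row compression of a shape. -/
noncomputable def KR (S : Finset (ℤ × ℤ)) : Finset (ℤ × ℤ) := S.image fun p => (p.1, (phiR S p.2 : ℤ))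

/-- The baseline shape of `S`. -/
noncomputable def Baseline (S : Finset (ℤ × ℤ)) : Finset (ℤ × ℤ) := KR (KC S)

/-- Number of distinct consecutive columns of `S`. -/
noncomputable def mC (S : Finset (ℤ × ℤ)) : ℕ := (S.image Prod.fst).sup (phiC S) + 1

/-- Number of distinct consecutive rows of `S`. -/
noncomputable def mR (S : Finset (ℤ × ℤ)) : ℕ := (S.image Prod.snd).sup (phiR S) + 1

/-- Consecutive multiplicity of the `i`-th distinct column of `S`. -/
noncomputable def MC (S : Finset (ℤ × ℤ)) (i : ℕ) : ℕ := ((S.image Prod.fst).filter fun x => phiC S x = i).card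

/-- Consecutive multiplicity of the `i`-th distinct row of `S`. -/
noncomputable def MR (S : Finset (ℤ × ℤ)) (i : ℕ) : ℕ := ((S.image Prod.snd).filter fun y => phiR S y = i).card

/-- The four unit directions. -/
def dirs : Finset (ℤ × ℤ) := {(1, 0), (-1, 0), (0, 1), (0, -1)}

/-- One node-addition growth step: a direction `d` is fixed and every new node is
generated at a position `p + d` for an existing node `p`. -/
def AddStep (S T : Finset (ℤ × ℤ)) : Prop :=
  ∃ d ∈ dirs, S ⊆ T ∧ T ⊆ S ∪ S.image (fun p => (p.1 + d.1, p.2 + d.2))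

lemma xmin_eq {T : Finset (ℤ × ℤ)} {m : ℤ} (h1 : ∃ p ∈ T, p.1 = m)
    (h2 : ∀ p ∈ T, m ≤ p.1) : xmin T = m := by
  obtain ⟨p, hp, hpm⟩ := h1
  have hne : (T.image Prod.fst).Nonempty := ⟨m, Finset.mem_image.2 ⟨p, hp, hpm⟩⟩
  have : xmin T = (T.image Prod.fst).min' hne := by
    unfold xmin; rw [← Finset.coe_min' hne]; rfl
  rw [this]
  refine le_antisymm (Finset.min'_le _ _ (Finset.mem_image.2 ⟨p, hp, hpm⟩)) ?_
  refine Finset.le_min' _ _ _ fun y hy => ?_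
  obtain ⟨q, hq, hqy⟩ := Finset.mem_image.1 hy
  exact hqy ▸ h2 q hq

lemma ymin_eq {T : Finset (ℤ × ℤ)} {m : ℤ} (h1 : ∃ p ∈ T, p.2 = m)
    (h2 : ∀ p ∈ T, m ≤ p.2) : ymin T = m := by
  obtain ⟨p, hp, hpm⟩ := h1
  have hne : (T.image Prod.snd).Nonempty := ⟨m, Finset.mem_image.2 ⟨p, hp, hpm⟩⟩
  have : ymin T = (T.image Prod.snd).min' hne := by
    unfold ymin; rw [← Finset.coe_min' hne]; rfl
  rw [this]
  refine le_antisymm (Finset.min'_le _ _ (Finset.mem_image.2 ⟨p, hp, hpm⟩)) ?_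
  refine Finset.le_min' _ _ _ fun y hy => ?_
  obtain ⟨q, hq, hqy⟩ := Finset.mem_image.1 hy
  exact hqy ▸ h2 q hq

lemma exists_xmin {S : Finset (ℤ × ℤ)} (hS : S.Nonempty) :
    ∃ p ∈ S, p.1 = xmin S ∧ ∀ q ∈ S, xmin S ≤ q.1 := by
  have hne : (S.image Prod.fst).Nonempty := hS.image _
  have hx : xmin S = (S.image Prod.fst).min' hne := by
    unfold xmin; rw [← Finset.coe_min' hne]; rfl
  obtain ⟨p, hp, hpm⟩ := Finset.mem_image.1 ((S.image Prod.fst).min'_mem hne)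
  exact ⟨p, hp, by rw [hx, hpm], fun q hq =>
    hx ▸ Finset.min'_le _ _ (Finset.mem_image.2 ⟨q, hq, rfl⟩)⟩

lemma exists_ymin {S : Finset (ℤ × ℤ)} (hS : S.Nonempty) :
    ∃ p ∈ S, p.2 = ymin S ∧ ∀ q ∈ S, ymin S ≤ q.2 := by
  have hne : (S.image Prod.snd).Nonempty := hS.image _
  have hy : ymin S = (S.image Prod.snd).min' hne := by
    unfold ymin; rw [← Finset.coe_min' hne]; rfl
  obtain ⟨p, hp, hpm⟩ := Finset.mem_image.1 ((S.image Prod.snd).min'_mem hne)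
  exact ⟨p, hp, by rw [hy, hpm], fun q hq =>
    hy ▸ Finset.min'_le _ _ (Finset.mem_image.2 ⟨q, hq, rfl⟩)⟩

lemma mem_F {l k : ℕ} {S : Finset (ℤ × ℤ)} {a b : ℤ} :
    (a, b) ∈ F l k S ↔ ∃ p ∈ S,
      ((2:ℤ) ^ l * p.1 - ((2:ℤ) ^ l - 1) * xmin S ≤ a ∧
        a ≤ (2:ℤ) ^ l * p.1 - ((2:ℤ) ^ l - 1) * xmin S + 2 ^ l - 1) ∧
      ((2:ℤ) ^ k * p.2 - ((2:ℤ) ^ k - 1) * ymin S ≤ b ∧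
        b ≤ (2:ℤ) ^ k * p.2 - ((2:ℤ) ^ k - 1) * ymin S + 2 ^ k - 1) := by
  simp only [F, Rec2, Finset.mem_biUnion, Finset.mem_product, Finset.mem_Icc]
  constructor
  · rintro ⟨p, hp, ⟨h1, h2⟩, h3, h4⟩
    exact ⟨p, hp, ⟨by linarith [h1], by push_cast at h2 ⊢; linarith [h2]⟩,
      ⟨by linarith [h3], by push_cast at h4 ⊢; linarith [h4]⟩⟩
  · rintro ⟨p, hp, ⟨h1, h2⟩, h3, h4⟩
    exact ⟨p, hp, ⟨by linarith [h1], by push_cast; linarith [h2]⟩,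
      ⟨by linarith [h3], by push_cast; linarith [h4]⟩⟩

lemma xmin_F {S : Finset (ℤ × ℤ)} (hS : S.Nonempty) (l k : ℕ) :
    xmin (F l k S) = xmin S := by
  obtain ⟨p, hp, hpm, hlb⟩ := exists_xmin hS
  obtain ⟨q, hq, hqm, hlb'⟩ := exists_ymin hS
  refine xmin_eq ?_ ?_
  · refine ⟨(xmin S, 2 ^ k * p.2 - (2 ^ k - 1) * ymin S), ?_, rfl⟩
    refine mem_F.2 ⟨p, hp, ?_, ?_⟩
    · constructor <;> [skip; skip] <;>
      · have h2 : (1:ℤ) ≤ 2 ^ l := one_le_pow₀ (by norm_num)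
        nlinarith [hpm]
    · have h2 : (1:ℤ) ≤ 2 ^ k := one_le_pow₀ (by norm_num)
      constructor <;> linarith
  · rintro ⟨x, y⟩ hxy
    obtain ⟨r, hr, ⟨h1, _⟩, _⟩ := mem_F.1 hxy
    have h2 : (1:ℤ) ≤ 2 ^ l := one_le_pow₀ (by norm_num)
    nlinarith [hlb r hr]

lemma ymin_F {S : Finset (ℤ × ℤ)} (hS : S.Nonempty) (l k : ℕ) :
    ymin (F l k S) = ymin S := by
  obtain ⟨p, hp, hpm, hlb⟩ := exists_ymin hS
  refine ymin_eq ?_ ?_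
  · obtain ⟨q, hq, hqm, hlb'⟩ := exists_xmin hS
    refine ⟨(2 ^ l * p.1 - (2 ^ l - 1) * xmin S, ymin S), ?_, rfl⟩
    refine mem_F.2 ⟨p, hp, ?_, ?_⟩
    · have h2 : (1:ℤ) ≤ 2 ^ l := one_le_pow₀ (by norm_num)
      constructor <;> linarith
    · constructor <;> [skip; skip] <;>
      · have h2 : (1:ℤ) ≤ 2 ^ k := one_le_pow₀ (by norm_num)
        nlinarith [hpm]
  · rintro ⟨x, y⟩ hxy
    obtain ⟨r, hr, _, ⟨h1, _⟩⟩ := mem_F.1 hxy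
    have h2 : (1:ℤ) ≤ 2 ^ k := one_le_pow₀ (by norm_num)
    nlinarith [hlb r hr]

lemma oneD (m : ℤ) (l l' : ℕ) (x a : ℤ) :
    (∃ a0 : ℤ,
      ((2:ℤ) ^ l * x - ((2:ℤ) ^ l - 1) * m ≤ a0 ∧
        a0 ≤ (2:ℤ) ^ l * x - ((2:ℤ) ^ l - 1) * m + 2 ^ l - 1) ∧
      ((2:ℤ) ^ l' * a0 - ((2:ℤ) ^ l' - 1) * m ≤ a ∧
        a ≤ (2:ℤ) ^ l' * a0 - ((2:ℤ) ^ l' - 1) * m + 2 ^ l' - 1)) ↔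
    ((2:ℤ) ^ (l' + l) * x - ((2:ℤ) ^ (l' + l) - 1) * m ≤ a ∧
      a ≤ (2:ℤ) ^ (l' + l) * x - ((2:ℤ) ^ (l' + l) - 1) * m + 2 ^ (l' + l) - 1) := by
  have hP : (0:ℤ) < 2 ^ l' := by positivity
  have hQ : (0:ℤ) < 2 ^ l := by positivity
  rw [pow_add]
  set P : ℤ := 2 ^ l' with hPdef
  set Q : ℤ := 2 ^ l with hQdef
  constructor
  · rintro ⟨a0, ⟨h1, h2⟩, h3, h4⟩
    constructor
    · nlinarith
    · nlinarith
  · rintro ⟨h1, h2⟩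
    set t : ℤ := a - (P * Q * x - (P * Q - 1) * m) with htdef
    have ht0 : 0 ≤ t := by linarith
    have htu : t ≤ P * Q - 1 := by linarith
    set q : ℤ := t / P with hqdef
    have hqr : P * q + t % P = t := Int.mul_ediv_add_emod t P
    have hr0 : 0 ≤ t % P := Int.emod_nonneg t (ne_of_gt hP)
    have hrP : t % P < P := Int.emod_lt_of_pos t hP
    have hq0 : 0 ≤ q := Int.ediv_nonneg ht0 hP.le
    have hqQ : q < Q := by
      rw [hqdef, Int.ediv_lt_iff_lt_mul hP]; linarith
    refine ⟨Q * x - (Q - 1) * m + q, ⟨by linarith, by linarith⟩, ?_, ?_⟩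
    · nlinarith
    · nlinarith

/-- additivity of the reconfiguration function. -/
theorem reconfiguration_additive (S : Finset (ℤ × ℤ)) (hS : S.Nonempty)
    (l k l' k' : ℕ) :
    F l' k' (F l k S) = F (l' + l) (k' + k) S := by
  ext ⟨a, b⟩
  rw [mem_F, mem_F]
  simp only [xmin_F hS, ymin_F hS]
  constructor
  · rintro ⟨⟨a0, b0⟩, hab0, hx, hy⟩
    obtain ⟨p, hp, hx0, hy0⟩ := mem_F.1 hab0
    exact ⟨p, hp, (oneD (xmin S) l l' p.1 a).1 ⟨a0, hx0, hx⟩,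
      (oneD (ymin S) k k' p.2 b).1 ⟨b0, hy0, hy⟩⟩
  · rintro ⟨p, hp, hx, hy⟩
    obtain ⟨a0, hx0, hx'⟩ := (oneD (xmin S) l l' p.1 a).2 hx
    obtain ⟨b0, hy0, hy'⟩ := (oneD (ymin S) k k' p.2 b).2 hy
    exact ⟨(a0, b0), mem_F.2 ⟨p, hp, hx0, hy0⟩, hx', hy'⟩
end

section
/- Let S be a shape and let D = {d_1 < d_2 < … < d_m} be a nonempty finite set of first coordinates of points of S. For an integer d, let o_d denote the single east column doubling o_d(T) := {(x,y) ∈ T : x ≤ d} ∪ {(x+1, y) : (x,y) ∈ T, x ≥ d}. Then the parallel RC doubling decomposes into single doublings applied in west-to-east order at shifted coordinates: RC_E(S, D) = o_{d_m + (m−1)}( … (o_{d_2 + 1}(o_{d_1}(S))) … ), where the i-th single doubling is applied at coordinate d_i + (i − 1). -/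
lemma RCE_empty (S : Finset (ℤ × ℤ)) : RCE S ∅ = S := by
  simp [RCE, wD]

lemma mem_RCE {S : Finset (ℤ × ℤ)} {D : Finset ℤ} {u v : ℤ} :
    (u, v) ∈ RCE S D ↔
      (∃ x, (x, v) ∈ S ∧ x + (wD D x : ℤ) = u) ∨
        (∃ x, x ∈ D ∧ (x, v) ∈ S ∧ x + (wD D x : ℤ) + 1 = u) := by
  simp only [RCE, Finset.mem_union, Finset.mem_image, Finset.mem_filter, Prod.ext_iff, Prod.exists]
  constructor
  · rintro (⟨a, b, h, h1, h2⟩ | ⟨a, b, ⟨h, hd⟩, h1, h2⟩)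
    · exact Or.inl ⟨a, by subst h2; exact ⟨h, h1⟩⟩
    · exact Or.inr ⟨a, hd, by subst h2; exact ⟨h, h1⟩⟩
  · rintro (⟨x, h, h1⟩ | ⟨x, hd, h, h1⟩)
    · exact Or.inl ⟨x, v, h, h1, rfl⟩
    · exact Or.inr ⟨x, v, ⟨h, hd⟩, h1, rfl⟩

lemma mem_oE {T : Finset (ℤ × ℤ)} {c u v : ℤ} :
    (u, v) ∈ oE c T ↔ ((u, v) ∈ T ∧ u ≤ c) ∨ ((u - 1, v) ∈ T ∧ c ≤ u - 1) := by
  simp only [oE, Finset.mem_union, Finset.mem_filter, Finset.mem_image, Prod.ext_iff, Prod.exists]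
  constructor
  · rintro (⟨h, h1⟩ | ⟨a, b, ⟨h, h1⟩, h2, h3⟩)
    · exact Or.inl ⟨h, h1⟩
    · refine Or.inr ?_
      subst h3
      have : a = u - 1 := by omega
      subst this
      exact ⟨h, by omega⟩
  · rintro (⟨h, h1⟩ | ⟨h, h1⟩)
    · exact Or.inl ⟨h, h1⟩
    · exact Or.inr ⟨u - 1, v, ⟨h, h1⟩, by omega, rfl⟩

lemma wD_le_card {D : Finset ℤ} {x : ℤ} : wD D x ≤ D.card := Finset.card_filter_le _ _

lemma wD_lt_card_of_mem {D : Finset ℤ} {x : ℤ} (hx : x ∈ D) : wD D x < D.card := by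
  apply Finset.card_lt_card
  rw [Finset.ssubset_iff_of_subset (Finset.filter_subset _ _)]
  exact ⟨x, hx, by simp⟩

lemma wD_eq_card {D : Finset ℤ} {x : ℤ} (h : ∀ b ∈ D, b < x) : wD D x = D.card := by
  rw [wD, Finset.filter_true_of_mem h]

lemma wD_insert_of_le {D : Finset ℤ} {d x : ℤ} (hx : x ≤ d) :
    wD (insert d D) x = wD D x := by
  rw [wD, Finset.filter_insert, if_neg (by omega)]; rfl

lemma wD_insert_of_gt {D : Finset ℤ} {d x : ℤ} (hd : ∀ b ∈ D, b < d) (hx : d < x) :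
    wD (insert d D) x = D.card + 1 := by
  have hdD : d ∉ D := fun h => lt_irrefl d (hd d h)
  rw [wD, Finset.filter_true_of_mem (by intro b hb; simp at hb; rcases hb with rfl | hb; exact hx; exact lt_trans (hd b hb) hx), Finset.card_insert_of_notMem hdD]

lemma RCE_insert_max (S : Finset (ℤ × ℤ)) (D : Finset ℤ) (d : ℤ)
    (hd : ∀ b ∈ D, b < d) :
    RCE S (insert d D) = oE (d + D.card) (RCE S D) := by
  ext ⟨u, v⟩
  rw [mem_oE, mem_RCE, mem_RCE, mem_RCE]
  constructor
  · rintro (⟨x, hS, hu⟩ | ⟨x, hxD, hS, hu⟩)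
    · rcases le_or_gt x d with hx | hx
      · rw [wD_insert_of_le hx] at hu
        exact Or.inl ⟨Or.inl ⟨x, hS, hu⟩, by have := wD_le_card (D := D) (x := x); omega⟩
      · rw [wD_insert_of_gt hd hx] at hu
        have hw : wD D x = D.card := wD_eq_card (fun b hb => lt_trans (hd b hb) hx)
        exact Or.inr ⟨Or.inl ⟨x, hS, by omega⟩, by omega⟩
    · rcases Finset.mem_insert.mp hxD with rfl | hxD'
      · rw [wD_insert_of_le le_rfl] at hu
        have hw : wD D x = D.card := wD_eq_card hd
        exact Or.inr ⟨Or.inl ⟨x, hS, by omega⟩, by omega⟩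
      · have hxd : x < d := hd x hxD'
        rw [wD_insert_of_le hxd.le] at hu
        have := wD_lt_card_of_mem hxD'
        exact Or.inl ⟨Or.inr ⟨x, hxD', hS, hu⟩, by omega⟩
  · rintro (⟨(⟨x, hS, hu⟩ | ⟨x, hxD, hS, hu⟩), hc⟩ | ⟨(⟨x, hS, hu⟩ | ⟨x, hxD, hS, hu⟩), hc⟩)
    · rcases le_or_gt x d with hx | hx
      · exact Or.inl ⟨x, hS, by rw [wD_insert_of_le hx]; exact hu⟩
      · have hw : wD D x = D.card := wD_eq_card (fun b hb => lt_trans (hd b hb) hx)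
        omega
    · have hxd : x < d := hd x hxD
      exact Or.inr ⟨x, Finset.mem_insert_of_mem hxD, hS, by rw [wD_insert_of_le hxd.le]; exact hu⟩
    · rcases lt_trichotomy x d with hx | rfl | hx
      · have := wD_le_card (D := D) (x := x)
        -- x + wD D x = u - 1 ≥ c = d + card, but x < d, wD ≤ card: need contradiction
        -- x + wD D x ≤ d - 1 + card < d + card ≤ u - 1 = x + wD D x, contradiction
        omega
      · have hw : wD D x = D.card := wD_eq_card hd
        refine Or.inr ⟨x, Finset.mem_insert_self _ _, hS, ?_⟩
        rw [wD_insert_of_le le_rfl]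
        omega
      · have hw : wD D x = D.card := wD_eq_card (fun b hb => lt_trans (hd b hb) hx)
        exact Or.inl ⟨x, hS, by rw [wD_insert_of_gt hd hx]; omega⟩
    · have hxd : x < d := hd x hxD
      have := wD_lt_card_of_mem hxD
      omega

open scoped List in
lemma sort_insert_max (D : Finset ℤ) (d : ℤ) (hd : ∀ b ∈ D, b < d) :
    (insert d D).sort (· ≤ ·) = D.sort (· ≤ ·) ++ [d] := by
  have hdD : d ∉ D := fun h => lt_irrefl d (hd d h)
  refine (fun hp hs => List.Perm.eq_of_pairwise' (Finset.pairwise_sort _ _) hs hp) ?_ ?_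
  · calc (insert d D).sort (· ≤ ·) ~ (insert d D).toList := Finset.sort_perm_toList _ _
      _ ~ d :: D.toList := Finset.toList_insert hdD
      _ ~ d :: D.sort (· ≤ ·) := List.Perm.cons d (Finset.sort_perm_toList _ _).symm
      _ ~ D.sort (· ≤ ·) ++ [d] := (List.perm_append_singleton _ _).symm
  · rw [List.pairwise_append]
    refine ⟨Finset.pairwise_sort _ _, List.pairwise_singleton _ _, ?_⟩
    intro x hx y hy
    simp only [List.mem_singleton] at hy
    subst hy
    exact (hd x ((Finset.mem_sort _).mp hx)).le

lemma RC_decomp_aux (S : Finset (ℤ × ℤ)) (D : Finset ℤ) :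
    RCE S D =
      (D.sort (· ≤ ·)).zipIdx.foldl (fun T di => oE (di.1 + (di.2 : ℤ)) T) S := by
  induction D using Finset.induction_on_max with
  | empty => simp [RCE_empty]
  | insert a s ha ih =>
    rw [RCE_insert_max S s a ha, sort_insert_max s a ha, List.zipIdx_append,
      List.foldl_append, ← ih]
    simp [List.zipIdx, Finset.length_sort]

/-- a parallel east RC doubling decomposes into single east column
doublings applied in west-to-east order at shifted coordinates: the `i`-th (0-based)
single doubling is applied at coordinate `d_i + i`. -/
theorem RC_doubling_decomposes (S : Finset (ℤ × ℤ)) (hS : S.Nonempty)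
    (D : Finset ℤ) (hD : D.Nonempty) (hadm : ∀ d ∈ D, ∃ y, (d, y) ∈ S) :
    RCE S D =
      (D.sort (· ≤ ·)).zipIdx.foldl (fun T di => oE (di.1 + (di.2 : ℤ)) T) S :=
  RC_decomp_aux S D
end

section
/- Every connected shape is reachable from its baseline: for every connected shape S there is a finite sequence of east and north RC doubling operations transforming the baseline B(S) into a translate of S. -/
@[simp] lemma mem_colS {S : Finset (ℤ × ℤ)} {x y : ℤ} : y ∈ colS S x ↔ (x, y) ∈ S := by
  simp only [colS, Finset.mem_image, Finset.mem_filter]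
  constructor
  · rintro ⟨⟨a,b⟩, ⟨hm, rfl⟩, rfl⟩; exact hm
  · intro h; exact ⟨(x,y), ⟨h, rfl⟩, rfl⟩

lemma xmin_le {S : Finset (ℤ × ℤ)} {p : ℤ × ℤ} (hp : p ∈ S) : xmin S ≤ p.1 := by
  have h1 : p.1 ∈ S.image Prod.fst := Finset.mem_image_of_mem _ hp
  have := Finset.min_le h1
  unfold xmin
  rcases hmin : (S.image Prod.fst).min with _ | m
  · have : S.image Prod.fst = ∅ := Finset.min_eq_top.mp hmin
    rw [this] at h1
    exact absurd h1 (Finset.notMem_empty _)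
  · rw [hmin] at this
    exact WithTop.coe_le_coe.mp this

lemma exists_xmin_s10 {S : Finset (ℤ × ℤ)} (hS : S.Nonempty) : ∃ y, (xmin S, y) ∈ S := by
  have hne : (S.image Prod.fst).Nonempty := hS.image _
  obtain ⟨m, hm⟩ := Finset.min_of_nonempty hne
  have hmem : m ∈ S.image Prod.fst := Finset.mem_of_min hm
  obtain ⟨p, hp, hpm⟩ := Finset.mem_image.mp hmem
  have : xmin S = m := by unfold xmin; rw [hm]; rfl
  exact ⟨p.2, by rw [this, ← hpm]; exact hp⟩

open Relation

/-- Images under maps that send edges to equal-or-adjacent pairs preserve connectivity. -/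
lemma shapeConnected_image {S : Finset (ℤ × ℤ)} (hc : ShapeConnected S)
    (f : ℤ × ℤ → ℤ × ℤ)
    (hf : ∀ p ∈ S, ∀ q ∈ S, Adj p q → f p = f q ∨ Adj (f p) (f q)) :
    ShapeConnected (S.image f) := by
  intro u hu v hv
  obtain ⟨a, ha, rfl⟩ := Finset.mem_image.mp hu
  obtain ⟨b, hb, rfl⟩ := Finset.mem_image.mp hv
  have key : ∀ a b : ℤ × ℤ,
      Relation.ReflTransGen (fun a b => a ∈ S ∧ b ∈ S ∧ Adj a b) a b →
      Relation.ReflTransGen (fun a b => a ∈ S.image f ∧ b ∈ S.image f ∧ Adj a b) (f a) (f b) := by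
    intro a b h
    induction h with
    | refl => exact Relation.ReflTransGen.refl
    | tail _ hstep ih =>
      rcases hstep with ⟨h1, h2, h3⟩
      rcases hf _ h1 _ h2 h3 with heq | hadj
      · rw [← heq]; exact ih
      · exact ih.tail ⟨Finset.mem_image_of_mem f h1, Finset.mem_image_of_mem f h2, hadj⟩
  exact key a b (hc a ha b hb)

/-- Columns of a connected shape are nonempty on intervals between occupied columns. -/
lemma col_nonempty_of_between {S : Finset (ℤ × ℤ)} (hc : ShapeConnected S)
    {a b : ℤ × ℤ} (ha : a ∈ S) (hb : b ∈ S) {t : ℤ} (h1 : a.1 ≤ t) (h2 : t ≤ b.1) :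
    ∃ y, (t, y) ∈ S := by
  have h := hc a ha b hb
  induction h with
  | refl =>
    have : t = a.1 := le_antisymm h2 h1
    exact ⟨a.2, by rw [this]; exact ha⟩
  | @tail m c hmc hstep ih =>
    rcases hstep with ⟨hm, hcS, hadj⟩
    by_cases hle : t ≤ m.1
    · exact ih hm hle
    · push_neg at hle
      have hle2 : c.1 ≤ m.1 + 1 := by
        unfold Adj at hadj; omega
      have : t = c.1 := by omega
      exact ⟨c.2, by rw [this]; simpa using hcS⟩

@[simp] lemma mem_translateSh {v : ℤ × ℤ} {S : Finset (ℤ × ℤ)} {p : ℤ × ℤ} :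
    p ∈ translateSh v S ↔ (p.1 - v.1, p.2 - v.2) ∈ S := by
  unfold translateSh
  simp only [Finset.mem_image]
  constructor
  · rintro ⟨⟨a,b⟩, hq, rfl⟩; simpa using hq
  · intro h; exact ⟨_, h, by simp⟩

lemma wD_shift (D : Finset ℤ) (c x : ℤ) : wD (D.image (· + c)) (x + c) = wD D x := by
  unfold wD
  rw [Finset.filter_image]
  rw [Finset.card_image_of_injective _ (add_left_injective c)]
  congr 1
  apply Finset.filter_congr
  intro a _
  omega

lemma RCE_translate (S : Finset (ℤ × ℤ)) (D : Finset ℤ) (v : ℤ × ℤ) :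
    RCE (translateSh v S) (D.image (· + v.1)) = translateSh v (RCE S D) := by
  unfold RCE translateSh
  rw [Finset.filter_image, Finset.image_union, Finset.image_image, Finset.image_image,
    Finset.image_image, Finset.image_image]
  have hpred : ∀ q ∈ S, (fun a : ℤ × ℤ => ((a.1 + v.1, a.2 + v.2) : ℤ × ℤ).1 ∈ D.image (· + v.1)) q ↔ q.1 ∈ D := by
    intro q _
    simp only [Finset.mem_image]
    constructor
    · rintro ⟨d, hd, he⟩
      have : d = q.1 := by omega
      subst this; exact hd
    · intro h; exact ⟨q.1, h, rfl⟩
  rw [Finset.filter_congr hpred]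
  congr 1
  · apply Finset.image_congr
    intro p _
    simp only [Function.comp_apply]
    rw [wD_shift]
    simp only [Prod.mk.injEq]
    exact ⟨by ring, trivial⟩
  · apply Finset.image_congr
    intro p _
    simp only [Function.comp_apply]
    rw [wD_shift]
    simp only [Prod.mk.injEq]
    exact ⟨by ring, trivial⟩

def swSh (S : Finset (ℤ × ℤ)) : Finset (ℤ × ℤ) := S.image Prod.swap

@[simp] lemma mem_swSh {S : Finset (ℤ × ℤ)} {p : ℤ × ℤ} : p ∈ swSh S ↔ p.swap ∈ S := by
  unfold swSh
  simp only [Finset.mem_image]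
  constructor
  · rintro ⟨q, hq, rfl⟩; simpa using hq
  · intro h; exact ⟨p.swap, h, by simp⟩

lemma swSh_swSh (S : Finset (ℤ × ℤ)) : swSh (swSh S) = S := by
  ext p; simp

lemma xmin_swSh (S : Finset (ℤ × ℤ)) : xmin (swSh S) = ymin S := by
  unfold xmin ymin swSh
  rw [Finset.image_image]
  congr 1

lemma RCE_swSh (S : Finset (ℤ × ℤ)) (D : Finset ℤ) : RCE (swSh S) D = swSh (RCN S D) := by
  unfold RCE RCN swSh
  rw [Finset.filter_image, Finset.image_union, Finset.image_image, Finset.image_image,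
    Finset.image_image, Finset.image_image]
  have hpred : ∀ q ∈ S, (fun a : ℤ × ℤ => (Prod.swap a).1 ∈ D) q ↔ q.2 ∈ D := by
    intro q _; simp
  rw [Finset.filter_congr hpred]
  congr 1

lemma northAdmissible_swSh (S : Finset (ℤ × ℤ)) (D : Finset ℤ) :
    eastAdmissible (swSh S) D ↔ northAdmissible S D := by
  unfold eastAdmissible northAdmissible
  constructor
  · rintro ⟨h1, h2⟩
    refine ⟨h1, fun d hd => ?_⟩
    obtain ⟨y, hy⟩ := h2 d hd
    exact ⟨y, by simpa using hy⟩
  · rintro ⟨h1, h2⟩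
    refine ⟨h1, fun d hd => ?_⟩
    obtain ⟨x, hx⟩ := h2 d hd
    exact ⟨x, by simpa using hx⟩

lemma RCStep_swSh {S T : Finset (ℤ × ℤ)} (h : RCStep S T) : RCStep (swSh S) (swSh T) := by
  obtain ⟨D, hD⟩ := h
  rcases hD with ⟨hadm, rfl⟩ | ⟨hadm, rfl⟩
  · -- east step on S becomes north step on swSh S
    refine ⟨D, Or.inr ⟨?_, ?_⟩⟩
    · rw [← northAdmissible_swSh (swSh S), swSh_swSh]
      exact hadm
    · have := RCE_swSh (swSh S) D
      rw [swSh_swSh] at this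
      rw [this]
      exact swSh_swSh _
  · exact ⟨D, Or.inl ⟨(northAdmissible_swSh S D).mpr hadm, (RCE_swSh S D).symm⟩⟩

lemma colS_swSh (S : Finset (ℤ × ℤ)) (x : ℤ) : colS (swSh S) x = rowS S x := by
  ext y
  simp only [mem_colS, mem_swSh, rowS, Finset.mem_image, Finset.mem_filter]
  constructor
  · intro h; exact ⟨(y, x), ⟨h, rfl⟩, rfl⟩
  · rintro ⟨⟨a, b⟩, ⟨hm, rfl⟩, rfl⟩; exact hm

lemma phiC_swSh (S : Finset (ℤ × ℤ)) (x : ℤ) : phiC (swSh S) x = phiR S x := by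
  unfold phiC phiR
  rw [xmin_swSh]
  congr 1
  apply Finset.filter_congr
  intro t _
  rw [colS_swSh, colS_swSh]

lemma KC_swSh (S : Finset (ℤ × ℤ)) : KC (swSh S) = swSh (KR S) := by
  unfold KC KR swSh
  rw [Finset.image_image, Finset.image_image]
  apply Finset.image_congr
  intro p _
  simp only [Function.comp_apply]
  rw [show Finset.image Prod.swap S = swSh S from rfl, phiC_swSh]
  rfl

lemma adj_swap {p q : ℤ × ℤ} (h : Adj p q) : Adj p.swap q.swap := by
  unfold Adj at *
  simp only [Prod.fst_swap, Prod.snd_swap]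
  omega

lemma shapeConnected_swSh {S : Finset (ℤ × ℤ)} (h : ShapeConnected S) :
    ShapeConnected (swSh S) := by
  unfold swSh
  exact shapeConnected_image h Prod.swap (fun p _ q _ hpq => Or.inr (adj_swap hpq))

lemma translateSh_swSh (v : ℤ × ℤ) (S : Finset (ℤ × ℤ)) :
    swSh (translateSh v S) = translateSh v.swap (swSh S) := by
  unfold swSh translateSh
  rw [Finset.image_image, Finset.image_image]
  rfl

lemma RCN_translate (S : Finset (ℤ × ℤ)) (D : Finset ℤ) (v : ℤ × ℤ) :
    RCN (translateSh v S) (D.image (· + v.2)) = translateSh v (RCN S D) := by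
  have h := RCE_translate (swSh S) D v.swap
  rw [← translateSh_swSh] at h
  rw [RCE_swSh, RCE_swSh] at h
  have h2 := congrArg swSh h
  rw [swSh_swSh, translateSh_swSh, Prod.swap_swap, swSh_swSh] at h2
  simpa using h2

lemma RCStep_translate {S T : Finset (ℤ × ℤ)} (v : ℤ × ℤ) (h : RCStep S T) :
    RCStep (translateSh v S) (translateSh v T) := by
  obtain ⟨D, hD⟩ := h
  rcases hD with ⟨⟨hne, hcol⟩, rfl⟩ | ⟨⟨hne, hrow⟩, rfl⟩
  · refine ⟨D.image (· + v.1), Or.inl ⟨⟨hne.image _, ?_⟩, (RCE_translate S D v).symm⟩⟩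
    intro d hd
    obtain ⟨d0, hd0, rfl⟩ := Finset.mem_image.mp hd
    obtain ⟨y, hy⟩ := hcol d0 hd0
    exact ⟨y + v.2, by simpa using hy⟩
  · refine ⟨D.image (· + v.2), Or.inr ⟨⟨hne.image _, ?_⟩, (RCN_translate S D v).symm⟩⟩
    intro d hd
    obtain ⟨d0, hd0, rfl⟩ := Finset.mem_image.mp hd
    obtain ⟨x, hx⟩ := hrow d0 hd0
    exact ⟨x + v.1, by simpa using hx⟩

lemma RTG_RCStep_translate {S T : Finset (ℤ × ℤ)} (v : ℤ × ℤ)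
    (h : Relation.ReflTransGen RCStep S T) :
    Relation.ReflTransGen RCStep (translateSh v S) (translateSh v T) :=
  Relation.ReflTransGen.lift (translateSh v) (fun _ _ hab => RCStep_translate v hab) _ _ h

lemma RTG_RCStep_swSh {S T : Finset (ℤ × ℤ)}
    (h : Relation.ReflTransGen RCStep S T) :
    Relation.ReflTransGen RCStep (swSh S) (swSh T) :=
  Relation.ReflTransGen.lift swSh (fun _ _ hab => RCStep_swSh hab) _ _ h

lemma translateSh_translateSh (v w : ℤ × ℤ) (S : Finset (ℤ × ℤ)) :
    translateSh v (translateSh w S) = translateSh (w + v) S := by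
  unfold translateSh
  rw [Finset.image_image]
  apply Finset.image_congr
  intro p _
  simp only [Function.comp_apply, Prod.fst_add, Prod.snd_add]
  rw [Prod.mk.injEq]
  exact ⟨by ring, by ring⟩

/-- Delete column `x` (merging it into column `x-1`) and shift everything east of it west. -/
def contractC (x : ℤ) (S : Finset (ℤ × ℤ)) : Finset (ℤ × ℤ) :=
  S.image (fun p => if p.1 < x then p else (p.1 - 1, p.2))

lemma mem_contractC {x : ℤ} {S : Finset (ℤ × ℤ)} {p : ℤ × ℤ} :
    p ∈ contractC x S ↔ (p ∈ S ∧ p.1 < x) ∨ ((p.1 + 1, p.2) ∈ S ∧ x - 1 ≤ p.1) := by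
  unfold contractC
  simp only [Finset.mem_image]
  constructor
  · rintro ⟨q, hq, rfl⟩
    by_cases h : q.1 < x
    · rw [if_pos h]; exact Or.inl ⟨hq, h⟩
    · rw [if_neg h]
      push_neg at h
      refine Or.inr ⟨?_, by simp; omega⟩
      simpa using hq
  · rintro (⟨hp, h⟩ | ⟨hp, h⟩)
    · exact ⟨p, hp, if_pos h⟩
    · refine ⟨(p.1 + 1, p.2), hp, ?_⟩
      rw [if_neg (by simp; omega)]
      simp

section Contract

variable {S : Finset (ℤ × ℤ)} {x : ℤ}
  (hcol : colS S x = colS S (x - 1)) (hne : (colS S x).Nonempty)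

include hcol hne

lemma contract_col_lt {t : ℤ} (ht : t < x) : colS (contractC x S) t = colS S t := by
  ext y
  simp only [mem_colS, mem_contractC]
  constructor
  · rintro (⟨h, _⟩ | ⟨h, h2⟩)
    · exact h
    · -- t + 1 ≤ x and t ≥ x - 1 so t = x - 1
      have : t = x - 1 := by omega
      subst this
      have : y ∈ colS S (x - 1) := by rw [← hcol]; exact mem_colS.mpr (by simpa using h)
      simpa using this
  · intro h
    exact Or.inl ⟨h, ht⟩

lemma contract_col_ge {t : ℤ} (ht : x - 1 ≤ t) : colS (contractC x S) t = colS S (t + 1) := by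
  ext y
  simp only [mem_colS, mem_contractC]
  constructor
  · rintro (⟨h, h2⟩ | ⟨h, _⟩)
    · have : t = x - 1 := by omega
      subst this
      have : y ∈ colS S (x - 1) := mem_colS.mpr h
      rw [← hcol] at this
      simpa using this
    · exact h
  · intro h
    exact Or.inr ⟨h, ht⟩

lemma contract_xmin : xmin (contractC x S) = xmin S := by
  obtain ⟨y, hy⟩ := hne
  have hxS : (x, y) ∈ S := mem_colS.mp hy
  have hx1S : (x - 1, y) ∈ S := mem_colS.mp (hcol ▸ hy)
  have hxm1 : xmin S ≤ x - 1 := xmin_le hx1S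
  have hSne : S.Nonempty := ⟨_, hxS⟩
  obtain ⟨y0, hy0⟩ := exists_xmin_s10 hSne
  apply le_antisymm
  · apply xmin_le (p := (xmin S, y0))
    exact mem_contractC.mpr (Or.inl ⟨hy0, by omega⟩)
  · -- xmin S is a lower bound for contractC
    obtain ⟨y1, hy1⟩ := exists_xmin_s10 (S := contractC x S) ⟨_, mem_contractC.mpr (Or.inl ⟨hy0, by omega⟩)⟩
    rcases mem_contractC.mp hy1 with ⟨h, _⟩ | ⟨h, _⟩
    · exact xmin_le h
    · have := xmin_le h
      simp at this
      omega

end Contract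

section Contract2

variable {S : Finset (ℤ × ℤ)} {x : ℤ}
  (hcol : colS S x = colS S (x - 1)) (hne : (colS S x).Nonempty)

include hcol hne

lemma xmin_le_xsub1 : xmin S ≤ x - 1 := by
  obtain ⟨y, hy⟩ := hne
  exact xmin_le (p := (x - 1, y)) (mem_colS.mp (hcol ▸ hy))

lemma contract_phi_lt {t : ℤ} (ht : t < x) : phiC (contractC x S) t = phiC S t := by
  unfold phiC
  rw [contract_xmin hcol hne]
  congr 1
  apply Finset.filter_congr
  intro s hs
  rw [Finset.mem_Icc] at hs
  rw [contract_col_lt hcol hne (by omega), contract_col_lt hcol hne (by omega)]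

lemma phi_x_eq_phi_xsub1 : phiC S x = phiC S (x - 1) := by
  unfold phiC
  congr 1
  ext s
  simp only [Finset.mem_filter, Finset.mem_Icc]
  constructor
  · rintro ⟨⟨h1, h2⟩, h3⟩
    refine ⟨⟨h1, ?_⟩, h3⟩
    rcases eq_or_lt_of_le h2 with rfl | h
    · exact absurd hcol h3
    · omega
  · rintro ⟨⟨h1, h2⟩, h3⟩
    exact ⟨⟨h1, by omega⟩, h3⟩

lemma contract_phi_ge {t : ℤ} (ht : x ≤ t) :
    phiC (contractC x S) t = phiC S (t + 1) := by
  have hxm : xmin S ≤ x - 1 := xmin_le_xsub1 hcol hne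
  unfold phiC
  rw [contract_xmin hcol hne]
  set m := xmin S with hm
  have hsplit1 : Finset.Icc (m + 1) t = Finset.Icc (m + 1) (x - 1) ∪ Finset.Icc x t := by
    ext s; simp only [Finset.mem_Icc, Finset.mem_union]; omega
  have hsplit2 : Finset.Icc (m + 1) (t + 1) =
      Finset.Icc (m + 1) (x - 1) ∪ Finset.Icc x (t + 1) := by
    ext s; simp only [Finset.mem_Icc, Finset.mem_union]; omega
  rw [hsplit1, hsplit2, Finset.filter_union, Finset.filter_union,
    Finset.card_union_of_disjoint, Finset.card_union_of_disjoint]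
  · have hA : Finset.filter (fun x' => colS (contractC x S) x' ≠ colS (contractC x S) (x' - 1))
        (Finset.Icc (m + 1) (x - 1)) =
        Finset.filter (fun x' => colS S x' ≠ colS S (x' - 1)) (Finset.Icc (m + 1) (x - 1)) := by
      apply Finset.filter_congr
      intro s hs
      rw [Finset.mem_Icc] at hs
      rw [contract_col_lt hcol hne (by omega), contract_col_lt hcol hne (by omega)]
    rw [hA]
    congr 1
    -- remains: card of filter over Icc x t for contract = card filter over Icc x (t+1) for S
    have himg : Finset.Icc (x + 1) (t + 1) = (Finset.Icc x t).image (· + 1) := by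
      rw [Finset.image_add_right_Icc]
    have hxfalse : Finset.filter (fun x' => colS S x' ≠ colS S (x' - 1)) (Finset.Icc x (t + 1)) =
        Finset.filter (fun x' => colS S x' ≠ colS S (x' - 1)) (Finset.Icc (x + 1) (t + 1)) := by
      ext s
      simp only [Finset.mem_filter, Finset.mem_Icc]
      constructor
      · rintro ⟨⟨h1, h2⟩, h3⟩
        rcases eq_or_lt_of_le h1 with rfl | h
        · exact absurd hcol h3
        · exact ⟨⟨by omega, h2⟩, h3⟩
      · rintro ⟨⟨h1, h2⟩, h3⟩
        exact ⟨⟨by omega, h2⟩, h3⟩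
    rw [hxfalse, himg, Finset.filter_image,
      Finset.card_image_of_injective _ (add_left_injective 1)]
    congr 1
    apply Finset.filter_congr
    intro s hs
    rw [Finset.mem_Icc] at hs
    have e1 : colS (contractC x S) s = colS S (s + 1) := contract_col_ge hcol hne (by omega)
    have e2 : colS (contractC x S) (s - 1) = colS S s := by
      rw [contract_col_ge hcol hne (by omega)]
      norm_num
    rw [e1, e2]
    constructor
    · intro h hh; exact h (by simpa using hh)
    · intro h hh; exact h (by simpa using hh)
  · apply Finset.disjoint_filter_filter
    rw [Finset.disjoint_left]
    intro s h1 h2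
    rw [Finset.mem_Icc] at h1 h2
    omega
  · apply Finset.disjoint_filter_filter
    rw [Finset.disjoint_left]
    intro s h1 h2
    rw [Finset.mem_Icc] at h1 h2
    omega

end Contract2

lemma wD_singleton (d z : ℤ) : wD {d} z = if d < z then 1 else 0 := by
  unfold wD
  rw [Finset.filter_singleton]
  split <;> simp_all

section Contract3

variable {S : Finset (ℤ × ℤ)} {x : ℤ}
  (hcol : colS S x = colS S (x - 1)) (hne : (colS S x).Nonempty)

include hcol hne

lemma KC_contract : KC (contractC x S) = KC S := by
  unfold KC
  ext p
  simp only [Finset.mem_image]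
  constructor
  · rintro ⟨q, hq, rfl⟩
    rcases mem_contractC.mp hq with ⟨h, hlt⟩ | ⟨h, hge⟩
    · exact ⟨q, h, by rw [contract_phi_lt hcol hne hlt]⟩
    · refine ⟨(q.1 + 1, q.2), h, ?_⟩
      show ((phiC S (q.1 + 1) : ℤ), q.2) = ((phiC (contractC x S) q.1 : ℤ), q.2)
      rcases eq_or_lt_of_le hge with heq | hgt
      · rw [contract_phi_lt hcol hne (by omega), ← heq,
          show x - 1 + 1 = x by ring, ← phi_x_eq_phi_xsub1 hcol hne]
      · rw [contract_phi_ge hcol hne (by omega)]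
  · rintro ⟨q, hq, rfl⟩
    by_cases h1 : q.1 < x
    · exact ⟨q, mem_contractC.mpr (Or.inl ⟨hq, h1⟩), by rw [contract_phi_lt hcol hne h1]⟩
    · by_cases h2 : q.1 = x
      · refine ⟨(x - 1, q.2), mem_contractC.mpr (Or.inl ⟨?_, by omega⟩), ?_⟩
        · have : q.2 ∈ colS S x := mem_colS.mpr (by rw [← h2]; simpa using hq)
          rw [hcol] at this
          exact mem_colS.mp this
        · show ((phiC (contractC x S) (x - 1) : ℤ), q.2) = ((phiC S q.1 : ℤ), q.2)
          rw [contract_phi_lt hcol hne (by omega), ← phi_x_eq_phi_xsub1 hcol hne, h2]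
      · refine ⟨(q.1 - 1, q.2), mem_contractC.mpr (Or.inr ⟨by simpa using hq, by omega⟩), ?_⟩
        show ((phiC (contractC x S) (q.1 - 1) : ℤ), q.2) = ((phiC S q.1 : ℤ), q.2)
        rw [contract_phi_ge hcol hne (by omega), show q.1 - 1 + 1 = q.1 by ring]

lemma RCE_contract : RCE (contractC x S) {x - 1} = S := by
  unfold RCE
  ext ⟨a, b⟩
  simp only [Finset.mem_union, Finset.mem_image, Finset.mem_filter, Finset.mem_singleton,
    Prod.mk.injEq]
  constructor
  · rintro (⟨⟨q1, q2⟩, hq, h1e, rfl⟩ | ⟨⟨q1, q2⟩, ⟨hq, hq1⟩, h1e, rfl⟩)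
    · have h1e' : q1 + (wD {x - 1} q1 : ℤ) = a := h1e
      rw [wD_singleton] at h1e'
      rcases mem_contractC.mp hq with ⟨h, hlt⟩ | ⟨h, hge⟩
      · have hlt' : q1 < x := hlt
        rw [if_neg (by omega)] at h1e'
        have : a = q1 := by push_cast at h1e'; omega
        subst this
        exact h
      · have hge' : x - 1 ≤ q1 := hge
        have h' : (q1 + 1, q2) ∈ S := h
        by_cases hx : q1 = x - 1
        · rw [if_neg (by omega)] at h1e'
          have ha : a = x - 1 := by push_cast at h1e'; omega
          subst ha
          have hxq : (x, q2) ∈ S := by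
            rw [hx, show x - 1 + 1 = x by ring] at h'
            exact h'
          have : q2 ∈ colS S (x - 1) := by rw [← hcol]; exact mem_colS.mpr hxq
          exact mem_colS.mp this
        · rw [if_pos (by omega)] at h1e'
          have : a = q1 + 1 := by push_cast at h1e'; omega
          subst this
          exact h'
    · have hq1' : q1 = x - 1 := hq1
      have h1e' : q1 + (wD {x - 1} q1 : ℤ) + 1 = a := h1e
      rw [hq1', wD_singleton, if_neg (by omega)] at h1e'
      have ha : a = x := by push_cast at h1e'; omega
      show (a, q2) ∈ S
      rw [ha]
      rcases mem_contractC.mp hq with ⟨h, _⟩ | ⟨h, _⟩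
      · have h' : (q1, q2) ∈ S := h
        rw [hq1'] at h'
        have : q2 ∈ colS S (x - 1) := mem_colS.mpr h'
        rw [← hcol] at this
        exact mem_colS.mp this
      · have h' : (q1 + 1, q2) ∈ S := h
        rw [hq1', show x - 1 + 1 = x by ring] at h'
        exact h'
  · intro hab
    by_cases h1 : a < x
    · exact Or.inl ⟨(a, b), mem_contractC.mpr (Or.inl ⟨hab, h1⟩),
        by rw [wD_singleton, if_neg (by omega)]; push_cast; ring, rfl⟩
    · by_cases h2 : a = x
      · refine Or.inr ⟨(x - 1, b), ⟨mem_contractC.mpr (Or.inl ⟨?_, by omega⟩), rfl⟩,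
          by rw [wD_singleton, if_neg (by omega)]; push_cast; omega, rfl⟩
        have : b ∈ colS S x := mem_colS.mpr (by rw [← h2]; exact hab)
        rw [hcol] at this
        exact mem_colS.mp this
      · exact Or.inl ⟨(a - 1, b), mem_contractC.mpr (Or.inr ⟨by simpa using hab, by omega⟩),
          by rw [wD_singleton, if_pos (by omega)]; push_cast; omega, rfl⟩

end Contract3

section Contract4

variable {S : Finset (ℤ × ℤ)} {x : ℤ}
  (hcol : colS S x = colS S (x - 1)) (hne : (colS S x).Nonempty)

include hcol hne

lemma eastAdmissible_contract : eastAdmissible (contractC x S) {x - 1} := by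
  refine ⟨Finset.singleton_nonempty _, fun d hd => ?_⟩
  rw [Finset.mem_singleton] at hd
  subst hd
  obtain ⟨y, hy⟩ := hne
  have : (x - 1, y) ∈ S := mem_colS.mp (hcol ▸ hy)
  exact ⟨y, mem_contractC.mpr (Or.inl ⟨this, by omega⟩)⟩

lemma card_contract : (contractC x S).card < S.card := by
  classical
  set A := S.filter (fun p => p.1 < x) with hA
  set B := (S.filter (fun p => ¬ p.1 < x)).image (fun p => (p.1 - 1, p.2)) with hB
  have hS' : contractC x S ⊆ A ∪ B := by
    intro p hp
    rcases mem_contractC.mp hp with ⟨h, hlt⟩ | ⟨h, hge⟩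
    · exact Finset.mem_union_left _ (Finset.mem_filter.mpr ⟨h, hlt⟩)
    · refine Finset.mem_union_right _ ?_
      refine Finset.mem_image.mpr ⟨(p.1 + 1, p.2), Finset.mem_filter.mpr ⟨h, by simp; omega⟩, ?_⟩
      simp
  have hcardAB : A.card + (S.filter (fun p => ¬ p.1 < x)).card = S.card :=
    Finset.card_filter_add_card_filter_not _
  have hcardB : B.card ≤ (S.filter (fun p => ¬ p.1 < x)).card := Finset.card_image_le
  have hinter : ((x - 1 : ℤ), hne.choose) ∈ A ∩ B := by
    have hy := hne.choose_spec
    refine Finset.mem_inter.mpr ⟨?_, ?_⟩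
    · exact Finset.mem_filter.mpr ⟨mem_colS.mp (hcol ▸ hy), by simp⟩
    · exact Finset.mem_image.mpr ⟨(x, hne.choose),
        Finset.mem_filter.mpr ⟨mem_colS.mp hy, by simp⟩, rfl⟩
  have hkey : (A ∪ B).card + (A ∩ B).card = A.card + B.card :=
    Finset.card_union_add_card_inter A B
  have h1 : 1 ≤ (A ∩ B).card := Finset.card_pos.mpr ⟨_, hinter⟩
  have h2 : (contractC x S).card ≤ (A ∪ B).card := Finset.card_le_card hS'
  omega

omit hcol hne in
lemma connected_contract (hconn : ShapeConnected S) : ShapeConnected (contractC x S) := by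
  unfold contractC
  apply shapeConnected_image hconn
  intro p _ q _ hadj
  by_cases hp : p.1 < x <;> by_cases hq : q.1 < x
  · rw [if_pos hp, if_pos hq]; exact Or.inr hadj
  · rw [if_pos hp, if_neg hq]
    left
    have h1 : p.1 = q.1 - 1 := by unfold Adj at hadj; omega
    have h2 : p.2 = q.2 := by unfold Adj at hadj; omega
    rw [Prod.ext_iff]
    exact ⟨h1, h2⟩
  · rw [if_neg hp, if_pos hq]
    left
    have h1 : p.1 - 1 = q.1 := by unfold Adj at hadj; omega
    have h2 : p.2 = q.2 := by unfold Adj at hadj; omega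
    rw [Prod.ext_iff]
    exact ⟨h1, h2⟩
  · rw [if_neg hp, if_neg hq]
    right
    unfold Adj at hadj ⊢
    simp only
    omega

end Contract4

lemma phiC_base {S : Finset (ℤ × ℤ)} (hconn : ShapeConnected S)
    (hnoeq : ∀ t, (colS S t).Nonempty → colS S t ≠ colS S (t - 1))
    {p : ℤ × ℤ} (hp : p ∈ S) : (phiC S p.1 : ℤ) = p.1 - xmin S := by
  have hSne : S.Nonempty := ⟨p, hp⟩
  obtain ⟨y0, hy0⟩ := exists_xmin_s10 hSne
  have hxm : xmin S ≤ p.1 := xmin_le hp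
  unfold phiC
  rw [Finset.filter_true_of_mem ?_]
  · rw [Int.card_Icc]
    rw [Int.toNat_of_nonneg (by omega)]
    ring
  · intro t ht
    rw [Finset.mem_Icc] at ht
    apply hnoeq
    obtain ⟨y, hy⟩ := col_nonempty_of_between hconn hy0 hp
      (show (xmin S, y0).1 ≤ t by simp; omega) (show t ≤ p.1 by omega)
    exact ⟨y, mem_colS.mpr hy⟩

lemma KC_base {S : Finset (ℤ × ℤ)} (hconn : ShapeConnected S)
    (hnoeq : ∀ t, (colS S t).Nonempty → colS S t ≠ colS S (t - 1)) :
    KC S = translateSh (-(xmin S), 0) S := by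
  unfold KC translateSh
  apply Finset.image_congr
  intro p hp
  rw [Prod.mk.injEq]
  refine ⟨?_, by ring⟩
  rw [phiC_base hconn hnoeq hp]
  ring

lemma east_main : ∀ (n : ℕ) (S : Finset (ℤ × ℤ)), S.card ≤ n → S.Nonempty → ShapeConnected S →
    ∃ v, Relation.ReflTransGen RCStep (KC S) (translateSh v S) := by
  intro n
  induction n with
  | zero =>
    intro S h hne _
    exact absurd (Finset.card_pos.mpr hne) (by omega)
  | succ n ih =>
    intro S hcard hne hconn
    by_cases hex : ∃ t, (colS S t).Nonempty ∧ colS S t = colS S (t - 1)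
    · obtain ⟨t, htne, htcol⟩ := hex
      have hcard' : (contractC t S).card ≤ n := by
        have := card_contract htcol htne
        omega
      have hne' : (contractC t S).Nonempty := by
        unfold contractC; exact hne.image _
      have hconn' := connected_contract (x := t) hconn
      obtain ⟨v, hv⟩ := ih _ hcard' hne' hconn'
      rw [← KC_contract htcol htne]
      refine ⟨v, hv.tail ?_⟩
      apply RCStep_translate
      exact ⟨{t - 1}, Or.inl ⟨eastAdmissible_contract htcol htne,
        (RCE_contract htcol htne).symm⟩⟩
    · push_neg at hex
      refine ⟨(-(xmin S), 0), ?_⟩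
      rw [KC_base hconn hex]

lemma north_main (S : Finset (ℤ × ℤ)) (hne : S.Nonempty) (hconn : ShapeConnected S) :
    ∃ v, Relation.ReflTransGen RCStep (KR S) (translateSh v S) := by
  obtain ⟨w, hw⟩ := east_main (swSh S).card (swSh S) le_rfl (hne.image _)
    (shapeConnected_swSh hconn)
  rw [KC_swSh] at hw
  have h2 := RTG_RCStep_swSh hw
  rw [swSh_swSh] at h2
  have h3 : swSh (translateSh w (swSh S)) = translateSh w.swap S := by
    rw [translateSh_swSh, swSh_swSh]
  rw [h3] at h2
  exact ⟨w.swap, h2⟩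

lemma phiC_step {S : Finset (ℤ × ℤ)} {a : ℤ} (ha : xmin S ≤ a) :
    phiC S (a + 1) = phiC S a ∨ phiC S (a + 1) = phiC S a + 1 := by
  unfold phiC
  have hsplit : Finset.Icc (xmin S + 1) (a + 1) =
      Finset.Icc (xmin S + 1) a ∪ Finset.Icc (a + 1) (a + 1) := by
    ext s; simp only [Finset.mem_Icc, Finset.mem_union]; omega
  rw [hsplit, Finset.filter_union, Finset.card_union_of_disjoint]
  · rw [Finset.Icc_self, Finset.filter_singleton]
    split
    · right; simp
    · left; simp
  · apply Finset.disjoint_filter_filter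
    rw [Finset.disjoint_left]
    intro s h1 h2
    rw [Finset.mem_Icc] at h1 h2
    omega

lemma connected_KC {S : Finset (ℤ × ℤ)} (hconn : ShapeConnected S) :
    ShapeConnected (KC S) := by
  unfold KC
  apply shapeConnected_image hconn
  intro p hp q hq hadj
  unfold Adj at hadj
  by_cases h : p.1 = q.1
  · right
    unfold Adj
    simp only
    rw [h, sub_self]
    simp only [Int.natAbs_zero, zero_add]
    omega
  · have h2 : p.2 = q.2 := by omega
    have h3 : q.1 = p.1 + 1 ∨ p.1 = q.1 + 1 := by omega
    rcases h3 with h3 | h3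
    · rcases phiC_step (S := S) (a := p.1) (xmin_le hp) with he | he
      · left
        rw [Prod.ext_iff]
        exact ⟨by rw [h3, he], by simpa using h2⟩
      · right
        unfold Adj
        simp only
        rw [h3, he, h2, sub_self]
        simp only [Int.natAbs_zero, add_zero]
        push_cast
        omega
    · rcases phiC_step (S := S) (a := q.1) (xmin_le hq) with he | he
      · left
        rw [Prod.ext_iff]
        exact ⟨by rw [h3, he], by simpa using h2⟩
      · right
        unfold Adj
        simp only
        rw [h3, he, h2, sub_self]
        simp only [Int.natAbs_zero, add_zero]
        push_cast
        omega

/-- every connected shape is reachable from its baseline via RC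
doubling operations, up to translation. -/
theorem baseline_reaches_shape (S : Finset (ℤ × ℤ)) (hS : S.Nonempty)
    (hconn : ShapeConnected S) :
    ∃ v : ℤ × ℤ, Relation.ReflTransGen RCStep (Baseline S) (translateSh v S) := by
  have hKCne : (KC S).Nonempty := by unfold KC; exact hS.image _
  obtain ⟨v, hv⟩ := north_main (KC S) hKCne (connected_KC hconn)
  obtain ⟨w, hw⟩ := east_main S.card S le_rfl hS hconn
  have hw' := RTG_RCStep_translate v hw
  rw [translateSh_translateSh] at hw'
  exact ⟨w + v, hv.trans hw'⟩
end
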